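/- For m ≥ 5, let H = K_{m,m} \ E(C_{2m}) and W a resolving set of H. It is impossible for W to simultaneously have a gap containing exactly three vertices and a gap containing exactly four vertices. -/

import Mathlib

/-- `W` resolves `G`: every vertex is determined by its distance vector to `W`. -/
def Resolves {V : Type*} (G : SimpleGraph V) (W : Set V) : Prop :=
  ∀ u v : V, (∀ w ∈ W, G.dist u w = G.dist v w) → u = v

/-- Metric dimension: minimum cardinality of a (finite) resolving set. -/
noncomputable def metricDim {V : Type*} (G : SimpleGraph V) : ℕ :=
  sInf {k | ∃ W : Set V, W.Finite ∧ W.ncard = k ∧ Resolves G W}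
/-- `K_{m,m}` minus the Hamiltonian cycle `x₁ y₁ x₂ y₂ … x_m y_m x₁` (0-indexed:
cycle edges are `xᵢ yᵢ` and `yᵢ x_{i+1 mod m}`). -/
def cycGraph (m : ℕ) : SimpleGraph (Fin m ⊕ Fin m) where
  Adj u v := match u, v with
    | Sum.inl i, Sum.inr j => j ≠ i ∧ (i : ℕ) ≠ ((j : ℕ) + 1) % m
    | Sum.inr j, Sum.inl i => j ≠ i ∧ (i : ℕ) ≠ ((j : ℕ) + 1) % m
    | _, _ => False
  symm := ⟨by rintro (i|i) (j|j) h <;> exact h⟩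
  loopless := ⟨by rintro (i|i) h <;> exact h⟩

/-- Position `k` (taken mod `2m`) along the Hamiltonian cycle
`x₁ y₁ x₂ y₂ …`: even positions `2i ↦ xᵢ`, odd positions `2i+1 ↦ yᵢ`. -/
def cyc (m : ℕ) [NeZero m] (k : ℕ) : Fin m ⊕ Fin m :=
  if (k % (2 * m)) % 2 = 0 then
    Sum.inl ⟨k % (2 * m) / 2, by
      have hm : 0 < m := Nat.pos_of_ne_zero (NeZero.ne m)
      have h : k % (2 * m) < 2 * m := Nat.mod_lt _ (by omega)
      exact Nat.div_lt_of_lt_mul (by omega)⟩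
  else
    Sum.inr ⟨k % (2 * m) / 2, by
      have hm : 0 < m := Nat.pos_of_ne_zero (NeZero.ne m)
      have h : k % (2 * m) < 2 * m := Nat.mod_lt _ (by omega)
      exact Nat.div_lt_of_lt_mul (by omega)⟩

/-- `W` has a gap of exactly `L` vertices starting at cycle position `s`:
the positions `s` and `s+L+1` are in `W` and the `L` positions strictly between are not. -/
def IsGap (m : ℕ) [NeZero m] (W : Set (Fin m ⊕ Fin m)) (s L : ℕ) : Prop :=
  cyc m s ∈ W ∧ cyc m (s + L + 1) ∈ W ∧ ∀ t, 1 ≤ t → t ≤ L → cyc m (s + t) ∉ W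


section Aux
variable (m : ℕ) [NeZero m]

lemma hm0 : 0 < m := Nat.pos_of_ne_zero (NeZero.ne m)

def nxt (j : Fin m) : Fin m := ⟨((j : ℕ) + 1) % m, Nat.mod_lt _ (hm0 m)⟩

def prv (i : Fin m) : Fin m := ⟨((i : ℕ) + m - 1) % m, Nat.mod_lt _ (hm0 m)⟩

lemma prv_spec (i k : Fin m) (h : (i : ℕ) = ((k : ℕ) + 1) % m) : k = prv m i := by
  have hk := k.isLt
  apply Fin.ext
  show (k : ℕ) = ((i : ℕ) + m - 1) % m
  rcases Nat.lt_or_ge ((k : ℕ) + 1) m with h1 | h1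
  · rw [Nat.mod_eq_of_lt h1] at h
    rw [h, show (k:ℕ) + 1 + m - 1 = (k:ℕ) + m by omega, Nat.add_mod_right,
      Nat.mod_eq_of_lt hk]
  · have h2 : (k : ℕ) + 1 = m := by omega
    rw [h2, Nat.mod_self] at h
    rw [h, Nat.zero_add, Nat.mod_eq_of_lt (by omega)]
    omega

lemma exists_not_mem4 (hm : 5 ≤ m) (a b c d : Fin m) :
    ∃ k : Fin m, k ≠ a ∧ k ≠ b ∧ k ≠ c ∧ k ≠ d := by
  by_contra h
  push_neg at h
  have hsub : (Finset.univ : Finset (Fin m)) ⊆ {a, b, c, d} := by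
    intro k _
    by_cases ha : k = a; · simp [ha]
    by_cases hb : k = b; · simp [hb]
    by_cases hc : k = c; · simp [hc]
    simp [h k ha hb hc]
  have h1 := Finset.card_le_card hsub
  have h2 := Finset.card_insert_le a ({b, c, d} : Finset (Fin m))
  have h3 := Finset.card_insert_le b ({c, d} : Finset (Fin m))
  have h4 := Finset.card_insert_le c ({d} : Finset (Fin m))
  have h5 := Finset.card_singleton (d : Fin m)
  rw [Finset.card_univ, Fintype.card_fin] at h1
  omega

lemma dist_ll (hm : 5 ≤ m) (i j : Fin m) (hij : i ≠ j) :
    (cycGraph m).dist (Sum.inl i) (Sum.inl j) = 2 := by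
  obtain ⟨k, h1, h2, h3, h4⟩ := exists_not_mem4 m hm i j (prv m i) (prv m j)
  have ha1 : (cycGraph m).Adj (Sum.inl i) (Sum.inr k) :=
    ⟨h1, fun h => h3 (prv_spec m i k h)⟩
  have ha2 : (cycGraph m).Adj (Sum.inr k) (Sum.inl j) :=
    ⟨h2, fun h => h4 (prv_spec m j k h)⟩
  have hle : (cycGraph m).dist (Sum.inl i) (Sum.inl j) ≤ 2 := SimpleGraph.dist_le (.cons ha1 (.cons ha2 .nil))
  have hne0 : (cycGraph m).dist (Sum.inl i) (Sum.inl j) ≠ 0 := by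
    rw [ne_eq, (SimpleGraph.Walk.reachable (.cons ha1 (.cons ha2 .nil))).dist_eq_zero_iff]
    simpa using hij
  have hne1 : (cycGraph m).dist (Sum.inl i) (Sum.inl j) ≠ 1 := by
    rw [ne_eq, SimpleGraph.dist_eq_one_iff_adj]
    exact fun h => h
  omega

lemma dist_rr (hm : 5 ≤ m) (i j : Fin m) (hij : i ≠ j) :
    (cycGraph m).dist (Sum.inr i) (Sum.inr j) = 2 := by
  obtain ⟨k, h1, h2, h3, h4⟩ := exists_not_mem4 m hm i j (nxt m i) (nxt m j)
  have ha1 : (cycGraph m).Adj (Sum.inr i) (Sum.inl k) :=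
    ⟨fun h => h1 h.symm, fun h => h3 (Fin.ext h)⟩
  have ha2 : (cycGraph m).Adj (Sum.inl k) (Sum.inr j) :=
    ⟨fun h => h2 h.symm, fun h => h4 (Fin.ext h)⟩
  have hle : (cycGraph m).dist (Sum.inr i) (Sum.inr j) ≤ 2 := SimpleGraph.dist_le (.cons ha1 (.cons ha2 .nil))
  have hne0 : (cycGraph m).dist (Sum.inr i) (Sum.inr j) ≠ 0 := by
    rw [ne_eq, (SimpleGraph.Walk.reachable (.cons ha1 (.cons ha2 .nil))).dist_eq_zero_iff]
    simpa using hij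
  have hne1 : (cycGraph m).dist (Sum.inr i) (Sum.inr j) ≠ 1 := by
    rw [ne_eq, SimpleGraph.dist_eq_one_iff_adj]
    exact fun h => h
  omega

end Aux


section Aux2
variable (m : ℕ) [NeZero m]

lemma par_eq (a : ℕ) : (a % (2*m)) % 2 = a % 2 := Nat.mod_mod_of_dvd a (dvd_mul_right 2 m)

lemma cyc_congr {a b : ℕ} (h : a % (2*m) = b % (2*m)) : cyc m a = cyc m b := by
  unfold cyc; simp only [h]

lemma cyc_inj {a b : ℕ} (h : cyc m a = cyc m b) : a % (2*m) = b % (2*m) := by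
  unfold cyc at h
  split_ifs at h with h1 h2 h2 <;>
    simp only [Sum.inl.injEq, Sum.inr.injEq, Fin.mk.injEq, reduceCtorEq] at h <;>
    omega

lemma cyc_left {a : ℕ} (h : a % 2 = 0) : ∃ i : Fin m, cyc m a = Sum.inl i := by
  unfold cyc
  rw [if_pos (by rw [par_eq]; exact h)]
  exact ⟨_, rfl⟩

lemma cyc_right {a : ℕ} (h : a % 2 = 1) : ∃ i : Fin m, cyc m a = Sum.inr i := by
  unfold cyc
  rw [if_neg (by rw [par_eq, h]; omega)]
  exact ⟨_, rfl⟩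

lemma cyc_surj (v : Fin m ⊕ Fin m) : ∃ p, cyc m p = v := by
  have hm0 : 0 < m := Nat.pos_of_ne_zero (NeZero.ne m)
  cases v with
  | inl i =>
    refine ⟨2 * i, ?_⟩
    have h1 : 2 * (i : ℕ) % (2*m) = 2 * i := Nat.mod_eq_of_lt (by have := i.isLt; omega)
    unfold cyc
    rw [if_pos (by rw [h1]; omega)]
    simp only [h1, Sum.inl.injEq]
    exact Fin.ext (by simp)
  | inr i =>
    refine ⟨2 * i + 1, ?_⟩
    have h1 : (2 * (i : ℕ) + 1) % (2*m) = 2 * i + 1 := Nat.mod_eq_of_lt (by have := i.isLt; omega)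
    unfold cyc
    rw [if_neg (by rw [h1]; omega)]
    simp only [h1, Sum.inr.injEq]
    exact Fin.ext (show (2*(i:ℕ)+1)/2 = (i:ℕ) by omega)

lemma nonadj_classify_base (a p : ℕ) (ha : a % 2 = 0) (hp : p % 2 = 1)
    (h : ¬ (cycGraph m).Adj (cyc m a) (cyc m p)) :
    p % (2*m) = (a+1) % (2*m) ∨ (p+1) % (2*m) = a % (2*m):= by
  have hm0 : 0 < m := Nat.pos_of_ne_zero (NeZero.ne m)
  have hA : a % (2*m) < 2*m := Nat.mod_lt _ (by omega)
  have hP : p % (2*m) < 2*m := Nat.mod_lt _ (by omega)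
  have hAe : (a % (2*m)) % 2 = 0 := by rw [par_eq]; exact ha
  have hPo : (p % (2*m)) % 2 = 1 := by rw [par_eq]; exact hp
  have ea : (a + 1) % (2*m) = a % (2*m) + 1 := by
    rw [Nat.add_mod, Nat.mod_eq_of_lt (show a % (2*m) + 1 % (2*m) < 2*m by
      rw [Nat.mod_eq_of_lt (show 1 < 2*m by omega)]; omega)]
    rw [Nat.mod_eq_of_lt (show 1 < 2*m by omega)]
  have ep : (p + 1) % (2*m) = (p % (2*m) + 1) % (2*m) := by
    rw [Nat.add_mod, Nat.mod_eq_of_lt (show 1 < 2*m by omega)]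
  have hAm : a % (2*m) / 2 < m := by omega
  have hPm : p % (2*m) / 2 < m := by omega
  have hca : cyc m a = Sum.inl ⟨a % (2*m) / 2, hAm⟩ := by unfold cyc; rw [if_pos hAe]
  have hcp : cyc m p = Sum.inr ⟨p % (2*m) / 2, hPm⟩ := by unfold cyc; rw [if_neg (by omega)]
  rw [hca, hcp] at h
  have h3 : ¬((⟨p % (2*m) / 2, hPm⟩ : Fin m) ≠ ⟨a % (2*m) / 2, hAm⟩ ∧
      a % (2*m) / 2 ≠ (p % (2*m) / 2 + 1) % m) := h
  by_cases hij : (⟨p % (2*m) / 2, hPm⟩ : Fin m) = ⟨a % (2*m) / 2, hAm⟩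
  · left
    have h2 : p % (2*m) / 2 = a % (2*m) / 2 := congrArg Fin.val hij
    rw [ea]; omega
  · have h' : a % (2*m) / 2 = (p % (2*m) / 2 + 1) % m := by
      by_contra hc
      exact h3 ⟨hij, hc⟩
    right
    rw [ep]
    rcases Nat.lt_or_ge (p % (2*m) / 2 + 1) m with hlt | hge
    · rw [Nat.mod_eq_of_lt hlt] at h'
      rw [Nat.mod_eq_of_lt (show p % (2*m) + 1 < 2*m by omega)]
      omega
    · have hq : p % (2*m) / 2 + 1 = m := by omega
      rw [hq, Nat.mod_self] at h'
      have : p % (2*m) + 1 = 2*m := by omega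
      rw [this, Nat.mod_self]
      omega

lemma nonadj_classify (a p : ℕ) (hap : (a + p) % 2 = 1)
    (h : ¬ (cycGraph m).Adj (cyc m a) (cyc m p)) :
    p % (2*m) = (a+1) % (2*m) ∨ (p+1) % (2*m) = a % (2*m) := by
  rcases Nat.mod_two_eq_zero_or_one a with ha | ha
  · exact nonadj_classify_base m a p ha (by omega) h
  · have h' : ¬ (cycGraph m).Adj (cyc m p) (cyc m a) := fun h2 => h h2.symm
    rcases nonadj_classify_base m p a (by omega) ha h' with h' | h'
    · right; exact h'.symm
    · left; exact h'.symm

end Aux2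


section Main
variable (m : ℕ) [NeZero m]

lemma key (hm : 5 ≤ m) (W : Set (Fin m ⊕ Fin m)) (hW : Resolves (cycGraph m) W)
    (a b : ℕ) (ha1 : 1 ≤ a) (hb1 : 1 ≤ b) (hab : a % 2 = b % 2)
    (ha0 : cyc m a ∉ W) (ham : cyc m (a-1) ∉ W) (hap : cyc m (a+1) ∉ W)
    (hb0 : cyc m b ∉ W) (hbm : cyc m (b-1) ∉ W) (hbp : cyc m (b+1) ∉ W) :
    cyc m a = cyc m b := by
  apply hW
  intro w hw
  obtain ⟨p, rfl⟩ := cyc_surj m w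
  have hpa : cyc m p ≠ cyc m a := fun h => ha0 (h ▸ hw)
  have hpb : cyc m p ≠ cyc m b := fun h => hb0 (h ▸ hw)
  by_cases hpar : p % 2 = a % 2
  · rcases Nat.mod_two_eq_zero_or_one a with h2 | h2
    · obtain ⟨i, hi⟩ := cyc_left m (a := a) h2
      obtain ⟨j, hj⟩ := cyc_left m (a := b) (show b % 2 = 0 by omega)
      obtain ⟨k, hk⟩ := cyc_left m (a := p) (show p % 2 = 0 by omega)
      rw [hi, hj, hk,
        dist_ll m hm i k (fun h => hpa (by rw [hk, hi, h])),
        dist_ll m hm j k (fun h => hpb (by rw [hk, hj, h]))]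
    · obtain ⟨i, hi⟩ := cyc_right m (a := a) h2
      obtain ⟨j, hj⟩ := cyc_right m (a := b) (show b % 2 = 1 by omega)
      obtain ⟨k, hk⟩ := cyc_right m (a := p) (show p % 2 = 1 by omega)
      rw [hi, hj, hk,
        dist_rr m hm i k (fun h => hpa (by rw [hk, hi, h])),
        dist_rr m hm j k (fun h => hpb (by rw [hk, hj, h]))]
  · have hadj_a : (cycGraph m).Adj (cyc m a) (cyc m p) := by
      by_contra hc
      rcases nonadj_classify m a p (by omega) hc with h | h
      · exact hap (cyc_congr m h ▸ hw)
      · have h' : (p+1) % (2*m) = ((a-1)+1) % (2*m) := by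
          rw [show (a-1)+1 = a by omega]; exact h
        have h2 : p % (2*m) = (a-1) % (2*m) := Nat.ModEq.add_right_cancel' 1 h'
        exact ham (cyc_congr m h2 ▸ hw)
    have hadj_b : (cycGraph m).Adj (cyc m b) (cyc m p) := by
      by_contra hc
      rcases nonadj_classify m b p (by omega) hc with h | h
      · exact hbp (cyc_congr m h ▸ hw)
      · have h' : (p+1) % (2*m) = ((b-1)+1) % (2*m) := by
          rw [show (b-1)+1 = b by omega]; exact h
        have h2 : p % (2*m) = (b-1) % (2*m) := Nat.ModEq.add_right_cancel' 1 h'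
        exact hbm (cyc_congr m h2 ▸ hw)
    rw [SimpleGraph.dist_eq_one_iff_adj.mpr hadj_a,
      SimpleGraph.dist_eq_one_iff_adj.mpr hadj_b]

end Main

/-- for `m ≥ 5`, a resolving set of `K_{m,m} \ E(C_{2m})` cannot
simultaneously have a gap of exactly three vertices and a gap of exactly four
vertices. -/
theorem stmt10 (m : ℕ) [NeZero m] (hm : 5 ≤ m) (W : Set (Fin m ⊕ Fin m))
    (hW : Resolves (cycGraph m) W) :
    ¬ ∃ s₁ s₂ : ℕ, IsGap m W s₁ 3 ∧ IsGap m W s₂ 4 := by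

  rintro ⟨s₁, s₂, ⟨g3a, g3b, g3c⟩, ⟨g4a, g4b, g4c⟩⟩
  have ha0 : cyc m (s₁+2) ∉ W := g3c 2 (by omega) (by omega)
  have ham : cyc m (s₁+2-1) ∉ W := by
    rw [show s₁+2-1 = s₁+1 by omega]; exact g3c 1 (by omega) (by omega)
  have hap : cyc m (s₁+2+1) ∉ W := by
    rw [show s₁+2+1 = s₁+3 by omega]; exact g3c 3 (by omega) (by omega)
  by_cases hpar : (s₁ + s₂) % 2 = 0
  · have hb0 : cyc m (s₂+2) ∉ W := g4c 2 (by omega) (by omega)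
    have hbm : cyc m (s₂+2-1) ∉ W := by
      rw [show s₂+2-1 = s₂+1 by omega]; exact g4c 1 (by omega) (by omega)
    have hbp : cyc m (s₂+2+1) ∉ W := by
      rw [show s₂+2+1 = s₂+3 by omega]; exact g4c 3 (by omega) (by omega)
    have hkey := key m hm W hW (s₁+2) (s₂+2) (by omega) (by omega) (by omega)
      ha0 ham hap hb0 hbm hbp
    have h := cyc_inj m hkey
    have h2 : (s₁+2+2) % (2*m) = (s₂+2+2) % (2*m) := Nat.ModEq.add_right 2 h
    rw [show s₁+2+2 = s₁+4 by omega, show s₂+2+2 = s₂+4 by omega] at h2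
    have g3b' : cyc m (s₁+4) ∈ W := by
      rw [show s₁+4 = s₁+3+1 by omega]; exact g3b
    exact g4c 4 (by omega) (by omega) (cyc_congr m h2 ▸ g3b')
  · have hb0 : cyc m (s₂+3) ∉ W := g4c 3 (by omega) (by omega)
    have hbm : cyc m (s₂+3-1) ∉ W := by
      rw [show s₂+3-1 = s₂+2 by omega]; exact g4c 2 (by omega) (by omega)
    have hbp : cyc m (s₂+3+1) ∉ W := by
      rw [show s₂+3+1 = s₂+4 by omega]; exact g4c 4 (by omega) (by omega)
    have hkey := key m hm W hW (s₁+2) (s₂+3) (by omega) (by omega) (by omega)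
      ha0 ham hap hb0 hbm hbp
    have h := cyc_inj m hkey
    have h' : (s₁+2) % (2*m) = ((s₂+1)+2) % (2*m) := by
      rw [show (s₂+1)+2 = s₂+3 by omega]; exact h
    have h2 : s₁ % (2*m) = (s₂+1) % (2*m) := Nat.ModEq.add_right_cancel' 2 h'
    exact g4c 1 (by omega) (by omega) (cyc_congr m h2 ▸ g3a)
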